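/- For k1 > 1 and k2 > 1, define l1(k1, k2) = (2/√(k1² − 1)) · arctan(√(k1² − 1)/k2) and l2(k1, k2) = (2/√(k2² − 1)) · arctan(√(k2² − 1)/k1). Then the partial derivative of l1 with respect to k2 and the partial derivative of l2 with respect to k1 both exist and are both equal to 2/(1 − k1² − k2²). -/

import Mathlib

open Real

lemma aux_deriv (a b : ℝ) (ha : 0 < a) (hb : 0 < b) :
    HasDerivAt (fun y : ℝ => 2 / a * Real.arctan (a / y)) (-2 / (b ^ 2 + a ^ 2)) b := by
  have h1 : HasDerivAt (fun y : ℝ => a / y) (-(a / b ^ 2)) b := by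
    have := ((hasDerivAt_inv hb.ne').const_mul a)
    simpa [div_eq_mul_inv] using this
  have h2 := (Real.hasDerivAt_arctan (a / b)).comp b h1
  have h3 := h2.const_mul (2 / a)
  refine h3.congr_deriv ?_
  field_simp

theorem stmt_5 (k1 k2 : ℝ) (hk1 : 1 < k1) (hk2 : 1 < k2) :
    HasDerivAt
      (fun y : ℝ => 2 / Real.sqrt (k1 ^ 2 - 1) * Real.arctan (Real.sqrt (k1 ^ 2 - 1) / y))
      (2 / (1 - k1 ^ 2 - k2 ^ 2)) k2 ∧
    HasDerivAt
      (fun x : ℝ => 2 / Real.sqrt (k2 ^ 2 - 1) * Real.arctan (Real.sqrt (k2 ^ 2 - 1) / x))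
      (2 / (1 - k1 ^ 2 - k2 ^ 2)) k1 := by
  have h1 : (0:ℝ) < k1 ^ 2 - 1 := by nlinarith
  have h2 : (0:ℝ) < k2 ^ 2 - 1 := by nlinarith
  have s1 : Real.sqrt (k1 ^ 2 - 1) ^ 2 = k1 ^ 2 - 1 := Real.sq_sqrt h1.le
  have s2 : Real.sqrt (k2 ^ 2 - 1) ^ 2 = k2 ^ 2 - 1 := Real.sq_sqrt h2.le
  constructor
  · have := aux_deriv _ k2 (Real.sqrt_pos.mpr h1) (by linarith)
    convert this using 1
    rw [s1, div_eq_div_iff (by nlinarith) (by nlinarith)]; ring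
  · have := aux_deriv _ k1 (Real.sqrt_pos.mpr h2) (by linarith)
    convert this using 1
    rw [s2, div_eq_div_iff (by nlinarith) (by nlinarith)]; ring
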